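/- Let G be an undirected graph, s,t nonadjacent vertices, A ⊆ V(G)\{s,t}, and let H be the graph obtained from G by adding all edges between s and the closed neighborhood N_G[A]. Then the minimal ({s}∪A),t-separators of G are exactly the minimal s,t-separators of H, and for every such separator S the component of {s}∪A in G−S equals the component of s in H−S. -/

import Mathlib

open SimpleGraph

variable {V : Type*}

/-- `u` can reach `v` in `G − S`: there is a walk whose support avoids `S`. -/
def ReachAvoid (G : SimpleGraph V) (S : Set V) (u v : V) : Prop :=
  ∃ p : G.Walk u v, ∀ w ∈ p.support, w ∉ S

/-- The union of the connected components of `G − S` that meet `X`. -/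
def SetReach (G : SimpleGraph V) (S X : Set V) : Set V :=
  {v | ∃ x ∈ X, ReachAvoid G S x v}

/-- Open neighborhood of a vertex set: vertices outside `X` adjacent to some vertex of `X`. -/
def Nbhd (G : SimpleGraph V) (X : Set V) : Set V :=
  {v | v ∉ X ∧ ∃ x ∈ X, G.Adj x v}

/-- `S` is an `A,B`-separator of `G`. -/
def IsSep (G : SimpleGraph V) (A B S : Set V) : Prop :=
  Disjoint S A ∧ Disjoint S B ∧ ∀ a ∈ A, ∀ b ∈ B, ¬ ReachAvoid G S a b

/-- `S` is an inclusion-minimal `A,B`-separator of `G`. -/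
def IsMinlSep (G : SimpleGraph V) (A B S : Set V) : Prop :=
  IsSep G A B S ∧ ∀ S' ⊂ S, ¬ IsSep G A B S'

/-- `S` is a minimum-cardinality `A,B`-separator of `G`. -/
def IsMinSep (G : SimpleGraph V) (A B S : Set V) : Prop :=
  IsSep G A B S ∧ ∀ S', IsSep G A B S' → S.ncard ≤ S'.ncard

/-- The minimum cardinality of an `A,B`-separator of `G` (`∞` if none exists). -/
noncomputable def kappa (G : SimpleGraph V) (A B : Set V) : ℕ∞ :=
  sInf {n : ℕ∞ | ∃ S : Set V, IsSep G A B S ∧ (S.ncard : ℕ∞) = n}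

lemma mem_setReach_of_mem {G : SimpleGraph V} {S X : Set V} {x : V}
    (hx : x ∈ X) (hxS : x ∉ S) : x ∈ SetReach G S X :=
  ⟨x, hx, Walk.nil, by simp [hxS]⟩

lemma setReach_step {G : SimpleGraph V} {S X : Set V} {u v : V}
    (hu : u ∈ SetReach G S X) (h : G.Adj u v) (hv : v ∉ S) : v ∈ SetReach G S X := by
  obtain ⟨x, hx, p, hp⟩ := hu
  exact ⟨x, hx, p.concat h, by
    intro w hw
    rw [Walk.support_concat, List.mem_append, List.mem_singleton] at hw
    rcases hw with hw | rfl
    · exact hp w hw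
    · exact hv⟩

lemma reach_closed {G' : SimpleGraph V} {S R : Set V}
    (hR : ∀ u v, u ∈ R → G'.Adj u v → v ∉ S → v ∈ R) :
    ∀ {u v : V} (p : G'.Walk u v), u ∈ R → (∀ w ∈ p.support, w ∉ S) → v ∈ R := by
  intro u v p
  induction p with
  | nil => exact fun h _ => h
  | cons h q ih =>
    intro hu hs
    exact ih (hR _ _ hu h (hs _ (by simp))) (fun w hw => hs w (by simp [hw]))

lemma setReach_subset_of_closed {G' : SimpleGraph V} {S X R : Set V}
    (hX : ∀ x ∈ X, x ∉ S → x ∈ R)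
    (hR : ∀ u v, u ∈ R → G'.Adj u v → v ∉ S → v ∈ R) :
    SetReach G' S X ⊆ R := by
  rintro v ⟨x, hx, p, hp⟩
  exact reach_closed hR p (hX x hx (hp x p.start_mem_support)) hp

lemma isSep_singleton_iff {G : SimpleGraph V} {X S : Set V} {t : V} :
    IsSep G X {t} S ↔ Disjoint S X ∧ Disjoint S {t} ∧ t ∉ SetReach G S X := by
  refine and_congr_right fun _ => and_congr_right fun _ => ?_
  constructor
  · rintro h ⟨x, hx, hr⟩
    exact h x hx t rfl hr
  · rintro h a ha b rfl hr
    exact h ⟨a, ha, hr⟩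

theorem minlSep_add_edges {V : Type*} (G : SimpleGraph V) (s t : V) (A : Set V)
    (hst : s ≠ t) (hadj : ¬ G.Adj s t) (hsA : s ∉ A) (htA : t ∉ A)
    (H : SimpleGraph V)
    (hH : H = G ⊔ SimpleGraph.fromRel (fun u v => u = s ∧ v ∈ A ∪ Nbhd G A)) :
    (∀ S : Set V, IsMinlSep G ({s} ∪ A) {t} S ↔ IsMinlSep H {s} {t} S) ∧
    (∀ S : Set V, IsMinlSep G ({s} ∪ A) {t} S →
      SetReach G S ({s} ∪ A) = SetReach H S {s}) := by
  -- adjacency in H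
  have Hadj : ∀ u v : V, H.Adj u v ↔
      G.Adj u v ∨ u ≠ v ∧ ((u = s ∧ v ∈ A ∪ Nbhd G A) ∨ (v = s ∧ u ∈ A ∪ Nbhd G A)) := by
    intro u v
    subst hH
    simp [SimpleGraph.fromRel_adj]

  have HadjS : ∀ v : V, v ≠ s → v ∈ A ∪ Nbhd G A → H.Adj s v := by
    intro v hv hvm
    exact (Hadj s v).2 (Or.inr ⟨fun h => hv h.symm, Or.inl ⟨rfl, hvm⟩⟩)
  have hGH : ∀ u v : V, G.Adj u v → H.Adj u v := fun u v h => (Hadj u v).2 (Or.inl h)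
  -- G-neighbours of vertices of A lie in the closed neighbourhood of A
  have hNb : ∀ a ∈ A, ∀ v, G.Adj a v → v ∈ A ∪ Nbhd G A := by
    intro a ha v hav
    by_cases hvA : v ∈ A
    · exact Or.inl hvA
    · exact Or.inr ⟨hvA, a, ha, hav⟩
  -- key: components agree for any S disjoint from A with s ∉ S
  have key : ∀ S : Set V, Disjoint S A → s ∉ S →
      SetReach G S ({s} ∪ A) = SetReach H S {s} := by
    intro S hSA hsS
    apply Set.Subset.antisymm
    · refine setReach_subset_of_closed ?_ ?_
      · rintro x (rfl | hx) hxS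
        · exact mem_setReach_of_mem rfl hxS
        · refine setReach_step (mem_setReach_of_mem rfl hsS) ?_ hxS
          exact HadjS x (fun h => hsA (h ▸ hx)) (Or.inl hx)
      · exact fun u v hu h hv => setReach_step hu (hGH u v h) hv
    · refine setReach_subset_of_closed ?_ ?_
      · rintro x rfl hxS
        exact mem_setReach_of_mem (Or.inl rfl) hxS
      · intro u v hu h hv
        rcases (Hadj u v).1 h with hG | ⟨hne, ⟨rfl, hvm⟩ | ⟨rfl, hum⟩⟩
        · exact setReach_step hu hG hv
        · rcases hvm with hvA | ⟨_, a, ha, hav⟩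
          · exact mem_setReach_of_mem (Or.inr hvA) hv
          · exact setReach_step
              (mem_setReach_of_mem (Or.inr ha) (hSA.ne_of_mem · ha rfl)) hav hv
        · exact mem_setReach_of_mem (Or.inl rfl) hv
  -- separators agree for any S disjoint from A
  have sep_iff : ∀ S : Set V, Disjoint S A →
      (IsSep G ({s} ∪ A) {t} S ↔ IsSep H {s} {t} S) := by
    intro S hSA
    rw [isSep_singleton_iff, isSep_singleton_iff]
    constructor
    · rintro ⟨h1, h2, h3⟩
      have hsS : s ∉ S := fun h => h1.ne_of_mem h (Or.inl rfl) rfl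
      exact ⟨h1.mono_right (Set.subset_union_left), h2, by rwa [← key S hSA hsS]⟩
    · rintro ⟨h1, h2, h3⟩
      have hsS : s ∉ S := fun h => h1.ne_of_mem h rfl rfl
      exact ⟨Set.disjoint_union_right.2 ⟨h1, hSA⟩, h2, by rwa [key S hSA hsS]⟩
  -- minimal s,t-separators of H are disjoint from A
  have minl_avoid : ∀ S : Set V, IsMinlSep H {s} {t} S → Disjoint S A := by
    intro S hS
    by_contra hnd
    obtain ⟨a, haS, haA⟩ := Set.not_disjoint_iff.1 hnd
    have hsS : s ∉ S := fun h => hS.1.1.ne_of_mem h rfl rfl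
    have htS : t ∉ S := fun h => hS.1.2.1.ne_of_mem h rfl rfl
    have hsub : S \ {a} ⊂ S :=
      Set.sdiff_singleton_ssubset.2 haS
    refine hS.2 (S \ {a}) hsub ?_
    rw [isSep_singleton_iff]
    refine ⟨hS.1.1.mono_left Set.diff_subset, hS.1.2.1.mono_left Set.diff_subset, ?_⟩
    -- show t not reachable from s in H − (S \ {a})
    intro hreach
    have htR : t ∈ SetReach H S {s} ∪ {a} := by
      refine setReach_subset_of_closed (R := SetReach H S {s} ∪ {a}) ?_ ?_ hreach
      · rintro x rfl _
        exact Or.inl (mem_setReach_of_mem rfl hsS)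
      · intro u v hu huv hv
        by_cases hva : v = a
        · exact Or.inr (by simp [hva])
        have hvS : v ∉ S := fun h => hv ⟨h, hva⟩
        rcases hu with hu | hu
        · exact Or.inl (setReach_step hu huv hvS)
        · -- u = a : every H-neighbour of a is s or H-adjacent to s
          have hua : u = a := hu
          subst hua
          by_cases hvs : v = s
          · exact Or.inl (mem_setReach_of_mem (hvs ▸ rfl) hvS)
          have hvm : v ∈ A ∪ Nbhd G A := by
            rcases (Hadj u v).1 huv with hG | ⟨hne, ⟨rfl, _⟩ | ⟨h2, _⟩⟩
            · exact hNb u haA v hG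
            · exact absurd haA hsA
            · exact absurd h2 hvs
          exact Or.inl (setReach_step (mem_setReach_of_mem rfl hsS)
            (HadjS v hvs hvm) hvS)
    rcases htR with htR | htR
    · exact (isSep_singleton_iff.1 hS.1).2.2 htR
    · exact htA (htR ▸ haA)
  refine ⟨fun S => ⟨?_, ?_⟩, fun S hS => ?_⟩
  · rintro ⟨hsep, hmin⟩
    have hSA : Disjoint S A := hsep.1.mono_right (Set.subset_union_right)
    exact ⟨(sep_iff S hSA).1 hsep, fun S' hsub hS' =>
      hmin S' hsub ((sep_iff S' (hSA.mono_left hsub.subset)).2 hS')⟩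
  · rintro hS
    have hSA : Disjoint S A := minl_avoid S hS
    exact ⟨(sep_iff S hSA).2 hS.1, fun S' hsub hS' =>
      hS.2 S' hsub ((sep_iff S' (hSA.mono_left hsub.subset)).1 hS')⟩
  · have hSA : Disjoint S A := hS.1.1.mono_right (Set.subset_union_right)
    have hsS : s ∉ S := fun h => hS.1.1.ne_of_mem h (Or.inl rfl) rfl
    exact key S hSA hsS
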